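/- Let E be a subfield of ℝ, let x₁ ∈ ℝ be transcendental over E, let n ∈ ℕ, and let x₂ ∈ ℝ be algebraic over E(x₁) of degree greater than n. Let g and h be polynomials in two variables Y₁, Y₂ with coefficients in E such that the degree of each of g and h in the variable Y₂ is at most n, h(x₁, x₂) ≠ 0, and g is not of the form a·h for any scalar a ∈ E. Then g(x₁, x₂)/h(x₁, x₂) does not belong to E. -/

import Mathlib

open IntermediateField MvPolynomial

lemma aux_key (F L : Type*) [Field F] [Field L] [Algebra F L]
    (x₁ : L) (hx₁ : Transcendental F x₁) (x₂ : L)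
    (p : MvPolynomial (Fin 2) F) (hpne : p ≠ 0) :
    ∃ r : Polynomial F⟮x₁⟯, r ≠ 0 ∧ r.natDegree ≤ MvPolynomial.degreeOf 1 p ∧
      Polynomial.aeval x₂ r = MvPolynomial.aeval ![x₁, x₂] p := by
  set gen : F⟮x₁⟯ := AdjoinSimple.gen F x₁ with hgen
  set φ : MvPolynomial (Fin 1) F →ₐ[F] F⟮x₁⟯ := MvPolynomial.aeval (fun _ => gen) with hφ
  have hφinj : Function.Injective φ := by
    have hcomp : (F⟮x₁⟯.val.comp φ : MvPolynomial (Fin 1) F →ₐ[F] L)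
        = MvPolynomial.aeval (fun _ : Fin 1 => x₁) := by
      apply MvPolynomial.algHom_ext; intro i; simp [hφ, hgen]
    have hinj : Function.Injective (MvPolynomial.aeval (R := F) (fun _ : Fin 1 => x₁)) := by
      rw [← algebraicIndependent_iff_injective_aeval, algebraicIndependent_unique_type_iff]
      exact hx₁
    have h2 : Function.Injective (⇑F⟮x₁⟯.val ∘ ⇑φ) := by
      rw [← AlgHom.coe_comp, hcomp]; exact hinj
    exact Function.Injective.of_comp h2
  set Ψ : MvPolynomial (Fin 2) F →ₐ[F] Polynomial F⟮x₁⟯ :=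
    (Polynomial.mapAlgHom φ).comp
      ((MvPolynomial.finSuccEquiv F 1).toAlgHom.comp (MvPolynomial.rename (Equiv.swap 0 1))) with hΨ
  refine ⟨Ψ p, ?_, ?_, ?_⟩
  · simp only [hΨ, AlgHom.comp_apply]
    intro h0
    have h1 : (MvPolynomial.finSuccEquiv F 1) (MvPolynomial.rename (Equiv.swap 0 1) p) = 0 := by
      have := Polynomial.map_injective φ.toRingHom hφinj
      apply this
      simpa using h0
    have h2 : MvPolynomial.rename (Equiv.swap 0 1) p = 0 :=
      (map_eq_zero_iff _ (AlgEquiv.injective _)).mp h1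
    exact hpne ((map_eq_zero_iff _ (MvPolynomial.rename_injective _ (Equiv.injective _))).mp h2)
  · simp only [hΨ, AlgHom.comp_apply]
    calc (Polynomial.mapAlgHom φ ((MvPolynomial.finSuccEquiv F 1)
            (MvPolynomial.rename (Equiv.swap 0 1) p))).natDegree
        ≤ ((MvPolynomial.finSuccEquiv F 1) (MvPolynomial.rename (Equiv.swap 0 1) p)).natDegree :=
          Polynomial.natDegree_map_le
      _ = MvPolynomial.degreeOf 0 (MvPolynomial.rename (Equiv.swap 0 1) p) :=
          MvPolynomial.natDegree_finSuccEquiv _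
      _ = MvPolynomial.degreeOf 1 p := by
          rw [← Equiv.swap_apply_right (0 : Fin 2) 1]
          exact MvPolynomial.degreeOf_rename_of_injective (Equiv.injective _) _
  · have key : (((Polynomial.aeval (R := F⟮x₁⟯) x₂).restrictScalars F).comp Ψ
        : MvPolynomial (Fin 2) F →ₐ[F] L) = MvPolynomial.aeval ![x₁, x₂] := by
      apply MvPolynomial.algHom_ext
      intro i
      refine Fin.cases ?_ (fun j => ?_) i
      · simp only [AlgHom.comp_apply, hΨ, MvPolynomial.rename_X,
          AlgHom.coe_restrictScalars', Function.comp_apply, AlgEquiv.toAlgHom_eq_coe,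
          AlgHom.coe_coe]
        rw [Equiv.swap_apply_left, show ((1 : Fin 2)) = Fin.succ 0 from rfl,
          AlgEquiv.coe_toAlgHom, MvPolynomial.finSuccEquiv_X_succ]
        simp [hφ, hgen, AdjoinSimple.algebraMap_gen]
      · have hj : j = 0 := Subsingleton.elim _ _
        subst hj
        simp only [AlgHom.comp_apply, hΨ, MvPolynomial.rename_X,
          AlgHom.coe_restrictScalars', Function.comp_apply, AlgEquiv.toAlgHom_eq_coe,
          AlgHom.coe_coe]
        rw [show (Equiv.swap (0 : Fin 2) 1) (Fin.succ 0) = 0 from rfl,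
          AlgEquiv.coe_toAlgHom, MvPolynomial.finSuccEquiv_X_zero]
        simp
    have := DFunLike.congr_fun key p
    simpa using this

theorem stmt_13 (E : Subfield ℝ) (x₁ : ℝ) (hx₁ : Transcendental E x₁)
    (n : ℕ) (x₂ : ℝ) (halg : IsAlgebraic E⟮x₁⟯ x₂)
    (hdeg : n < (minpoly E⟮x₁⟯ x₂).natDegree)
    (g h : MvPolynomial (Fin 2) E)
    (hg : MvPolynomial.degreeOf 1 g ≤ n) (hh : MvPolynomial.degreeOf 1 h ≤ n)
    (hhne : MvPolynomial.aeval ![x₁, x₂] h ≠ 0)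
    (hgh : ∀ a : E, g ≠ MvPolynomial.C a * h) :
    MvPolynomial.aeval ![x₁, x₂] g / MvPolynomial.aeval ![x₁, x₂] h ∉ E := by
  intro hmem
  obtain ⟨a, ha⟩ : ∃ a : E, (a : ℝ) =
      MvPolynomial.aeval ![x₁, x₂] g / MvPolynomial.aeval ![x₁, x₂] h := ⟨⟨_, hmem⟩, rfl⟩
  have hmul : MvPolynomial.aeval ![x₁, x₂] g = (a : ℝ) * MvPolynomial.aeval ![x₁, x₂] h :=
    ((eq_div_iff hhne).mp ha).symm
  set p := g - MvPolynomial.C a * h with hp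
  have hpne : p ≠ 0 := fun h0 => hgh a (by rwa [hp, sub_eq_zero] at h0)
  have hpeval : MvPolynomial.aeval ![x₁, x₂] p = 0 := by
    simp only [hp, map_sub, map_mul, MvPolynomial.aeval_C]
    rw [hmul, show (algebraMap ↥E ℝ) a = (a : ℝ) from rfl]
    ring
  have hpdeg : MvPolynomial.degreeOf 1 p ≤ n :=
    le_trans (MvPolynomial.degreeOf_sub_le _ _ _)
      (max_le hg (le_trans (MvPolynomial.degreeOf_C_mul_le _ _ _) hh))
  obtain ⟨r, hrne, hrdeg, hreq⟩ := aux_key E ℝ x₁ hx₁ x₂ p hpne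
  have hr0 : Polynomial.aeval x₂ r = 0 := by rw [hreq, hpeval]
  have hdvd := minpoly.dvd E⟮x₁⟯ x₂ hr0
  have := Polynomial.natDegree_le_of_dvd hdvd hrne
  omega
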